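/- For any vectors c, d ∈ ℝ³, with E₁₂ = [c]×, E₂₃ = [d]×, E₃₁ = −[c]× − [d]×, one has E₁₂ᵀE₁₂E₂₃ − (1/2)tr(E₁₂ᵀE₁₂)·E₂₃ + E₁₂* E₃₁ᵀ = 0, where * denotes adjugate. -/
import Mathlib


open Matrix

/-- The cross-product matrix of a vector `a ∈ ℝ³`. -/
def skew (a : Fin 3 → ℝ) : Matrix (Fin 3) (Fin 3) ℝ :=
  !![0, -a 2, a 1; a 2, 0, -a 0; -a 1, a 0, 0]

lemma skew_transpose (a : Fin 3 → ℝ) : (skew a)ᵀ = skew (-a) := by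
  ext i j; fin_cases i <;> fin_cases j <;> simp [skew, Matrix.transpose_apply]

lemma skew_neg_sub (c d : Fin 3 → ℝ) : -skew c - skew d = skew (-c - d) := by
  ext i j; fin_cases i <;> fin_cases j <;> simp [skew] <;> ring

set_option maxHeartbeats 2000000 in
/-- With `E₁₂ = [c]×`, `E₂₃ = [d]×`, `E₃₁ = −[c]× − [d]×`:
`E₁₂ᵀE₁₂E₂₃ − (1/2)tr(E₁₂ᵀE₁₂)·E₂₃ + E₁₂* E₃₁ᵀ = 0`. -/
theorem skew_cubic_constraint (c d : Fin 3 → ℝ) :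
    (skew c)ᵀ * skew c * skew d
      - ((1 : ℝ) / 2 * Matrix.trace ((skew c)ᵀ * skew c)) • skew d
      + (skew c).adjugate * (-skew c - skew d)ᵀ = 0 := by
  rw [skew_transpose, skew_neg_sub, skew_transpose]
  simp only [skew, Matrix.mul_fin_three, Matrix.trace_fin_three, Matrix.adjugate_fin_three_of,
    Pi.neg_apply, Pi.sub_apply]
  ext i j
  fin_cases i <;> fin_cases j <;> simp <;> ring
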